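/- Let c < a < d be real numbers and set δ := (d-c)/2. Let f : ℝ → ℂ be differentiable at every point of [a,d] with derivative f' interval-integrable on [a,d]. Then f(a)/2 = (1/(2δ)) ∫_a^d f(u) du - ∫_a^d ψ((a-u)/(2δ)) f'(u) du + f(d)·(1/2 - (d-a)/(2δ)). -/

import Mathlib

open MeasureTheory intervalIntegral

/-- Theorem 1(II) of the paper: for `f` differentiable on `[a,d]` with integrable
derivative, `f(a)/2 = (1/(2δ)) ∫_a^d f - ∫_a^d ψ((a-u)/(2δ)) f'(u) du
+ f(d)(1/2 - (d-a)/(2δ))`, where `ψ(u) = u - ⌊u⌋ - 1/2` and `δ = (d-c)/2`. -/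
theorem fourier_theorem1_II (c a d : ℝ) (hca : c < a) (had : a < d)
    (δ : ℝ) (hδ : δ = (d - c) / 2)
    (f f' : ℝ → ℂ)
    (hdiff : ∀ x ∈ Set.Icc a d, HasDerivAt f (f' x) x)
    (hint : IntervalIntegrable f' volume a d) :
    f a / 2 = ((1 / (2 * δ) : ℝ) : ℂ) * (∫ u in a..d, f u)
      - (∫ u in a..d,
          (((a - u) / (2 * δ) - ⌊(a - u) / (2 * δ)⌋ - 1 / 2 : ℝ) : ℂ) * f' u)
      + f d * ((1 / 2 : ℂ) - (((d - a) / (2 * δ) : ℝ) : ℂ)) := by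
  have h2δ : (0:ℝ) < 2 * δ := by rw [hδ]; linarith
  set g : ℝ → ℂ := fun u => (((a - u) / (2 * δ) + 1 / 2 : ℝ) : ℂ) with hg
  -- step 1: rewrite the integrand (floor = -1 on Ioc a d)
  have hcongr : (∫ u in a..d,
          (((a - u) / (2 * δ) - ⌊(a - u) / (2 * δ)⌋ - 1 / 2 : ℝ) : ℂ) * f' u)
      = ∫ u in a..d, g u * f' u := by
    apply intervalIntegral.integral_congr_ae
    filter_upwards with u hu
    rw [Set.uIoc_of_le had.le] at hu
    have hfloor : ⌊(a - u) / (2 * δ)⌋ = -1 := by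
      rw [Int.floor_eq_iff]
      constructor
      · rw [le_div_iff₀ h2δ]
        have : 2 * δ = d - c := by rw [hδ]; ring
        push_cast
        nlinarith [hu.1, hu.2]
      · push_cast
        have : (a - u) / (2 * δ) < 0 :=
          div_neg_of_neg_of_pos (by linarith [hu.1]) h2δ
        linarith
    rw [hfloor]
    simp only [hg]
    push_cast
    ring_nf
  rw [hcongr]
  -- step 2: integration by parts
  have hga : ∀ x ∈ Set.uIcc a d, HasDerivAt g ((-(1 / (2 * δ)) : ℝ) : ℂ) x := by
    intro x _
    have h1 : HasDerivAt (fun u : ℝ => (a - u) / (2 * δ) + 1 / 2)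
        (-(1 / (2 * δ))) x := by
      have h2 := (((hasDerivAt_id x).const_sub a).div_const (2 * δ)).add_const
        (1 / 2 : ℝ)
      exact h2.congr_deriv (by ring)
    exact h1.ofReal_comp
  have hparts := intervalIntegral.integral_mul_deriv_eq_deriv_mul hga
    (fun x hx => hdiff x (by rwa [Set.uIcc_of_le had.le] at hx))
    (intervalIntegrable_const) hint
  rw [hparts]
  rw [intervalIntegral.integral_const_mul]
  have : g d = (((a - d) / (2 * δ) + 1 / 2 : ℝ) : ℂ) := rfl
  rw [this]
  have : g a = (((a - a) / (2 * δ) + 1 / 2 : ℝ) : ℂ) := rfl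
  rw [this]
  have hne : ((2 * δ : ℝ) : ℂ) ≠ 0 := by
    exact_mod_cast ne_of_gt h2δ
  push_cast
  field_simp
  ring
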